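/- Let r > 0, {v₀,v₁,w} a positive oriented orthonormal system, and α(t) = √(1+r²) w + r cos(2πt) v₁ + r sin(2πt) v₀. Let λ₁, λ₂ : ℝ → ℝ be C². Then for all t: (−D_t² + 1)(λ₁ α̇ + λ₂ (α ×ₘ α̇))(t) = (−λ₁''(t) + 4π√(1+r²) λ₂'(t) + (4π²(1+r²)+1) λ₁(t)) α̇(t) + (−λ₂''(t) − 4π√(1+r²) λ₁'(t) + (4π²(1+r²)+1) λ₂(t)) (α(t) ×ₘ α̇(t)). -/

import Mathlib

noncomputable section

open Real

/-- The Minkowski inner product on ℝ³. -/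
def mink (v w : Fin 3 → ℝ) : ℝ := v 0 * w 0 + v 1 * w 1 - v 2 * w 2

/-- The twisted cross product on ℝ³. -/
def mcross (v w : Fin 3 → ℝ) : Fin 3 → ℝ :=
  ![v 2 * w 1 - v 1 * w 2, v 0 * w 2 - v 2 * w 0, v 0 * w 1 - v 1 * w 0]

/-- A positive oriented orthonormal system with respect to the Minkowski metric. -/
def posOrth (v₀ v₁ w : Fin 3 → ℝ) : Prop :=
  mink v₀ v₁ = 0 ∧ mink v₀ w = 0 ∧ mink v₁ w = 0 ∧
  mink v₀ v₀ = 1 ∧ mink v₁ v₁ = 1 ∧ mink w w = -1 ∧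
  mcross v₀ v₁ = w

/-- Membership in the hyperbolic plane ℍ ⊂ ℝ³. -/
def inH (x : Fin 3 → ℝ) : Prop := x 2 ^ 2 - x 0 ^ 2 - x 1 ^ 2 = 1 ∧ 0 < x 2

/-- The covariant derivative on ℍ of a tangent vector field `V` along a curve `γ` in ℍ:
`D_t V(t) = V̇(t) + ⟨V̇(t), γ(t)⟩ₘ γ(t)`. -/
def covDt (γ V : ℝ → Fin 3 → ℝ) : ℝ → Fin 3 → ℝ :=
  fun t => deriv V t + mink (deriv V t) (γ t) • γ t

lemma mcross_triple (a b : Fin 3 → ℝ) :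
    mcross a (mcross a b) = mink a a • b - mink a b • a := by
  funext i
  fin_cases i <;>
    simp [mcross, mink, Pi.sub_apply, Pi.smul_apply, smul_eq_mul] <;> ring

lemma mcross_anti (a b : Fin 3 → ℝ) : mcross a b = -mcross b a := by
  funext i; fin_cases i <;> simp [mcross] <;> ring

lemma mcross_self (a : Fin 3 → ℝ) : mcross a a = 0 := by
  funext i; fin_cases i <;> simp [mcross] <;> ring

lemma mink_comm (a b : Fin 3 → ℝ) : mink a b = mink b a := by
  simp [mink]; ring

lemma mcross_add_left (a b c : Fin 3 → ℝ) :
    mcross (a + b) c = mcross a c + mcross b c := by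
  funext i; fin_cases i <;> simp [mcross] <;> ring

lemma mcross_add_right (a b c : Fin 3 → ℝ) :
    mcross a (b + c) = mcross a b + mcross a c := by
  funext i; fin_cases i <;> simp [mcross] <;> ring

lemma mcross_smul_left (r : ℝ) (a c : Fin 3 → ℝ) :
    mcross (r • a) c = r • mcross a c := by
  funext i; fin_cases i <;> simp [mcross] <;> ring

lemma mcross_smul_right (r : ℝ) (a c : Fin 3 → ℝ) :
    mcross a (r • c) = r • mcross a c := by
  funext i; fin_cases i <;> simp [mcross] <;> ring

lemma mcross_neg_right (a c : Fin 3 → ℝ) : mcross a (-c) = -mcross a c := by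
  funext i; fin_cases i <;> simp [mcross] <;> ring

lemma mink_add_left (a b c : Fin 3 → ℝ) : mink (a + b) c = mink a c + mink b c := by
  simp [mink]; ring

lemma mink_smul_left (r : ℝ) (a c : Fin 3 → ℝ) : mink (r • a) c = r * mink a c := by
  simp [mink]; ring

lemma mink_add_right (a b c : Fin 3 → ℝ) : mink a (b + c) = mink a b + mink a c := by
  simp [mink]; ring

lemma mink_smul_right (r : ℝ) (a c : Fin 3 → ℝ) : mink a (r • c) = r * mink a c := by
  simp [mink]; ring

lemma posOrth.cross_v₀_w {v₀ v₁ w : Fin 3 → ℝ} (h : posOrth v₀ v₁ w) :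
    mcross v₀ w = v₁ := by
  obtain ⟨h01, h0w, h1w, h00, h11, hww, hc⟩ := h
  rw [← hc, mcross_triple, h00, h01]
  simp

lemma posOrth.cross_v₁_w {v₀ v₁ w : Fin 3 → ℝ} (h : posOrth v₀ v₁ w) :
    mcross v₁ w = -v₀ := by
  obtain ⟨h01, h0w, h1w, h00, h11, hww, hc⟩ := h
  rw [← hc, mcross_anti v₀ v₁, mcross_neg_right, mcross_triple, h11, mink_comm v₁ v₀, h01]
  simp

lemma mink_frame {v₀ v₁ w : Fin 3 → ℝ} (h : posOrth v₀ v₁ w) (a₀ a₁ a₂ b₀ b₁ b₂ : ℝ) :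
    mink (a₀ • v₀ + a₁ • v₁ + a₂ • w) (b₀ • v₀ + b₁ • v₁ + b₂ • w)
      = a₀*b₀ + a₁*b₁ - a₂*b₂ := by
  obtain ⟨h01, h0w, h1w, h00, h11, hww, hc⟩ := h
  simp only [mink_add_left, mink_add_right, mink_smul_left, mink_smul_right,
    h01, h0w, h1w, h00, h11, hww, mink_comm v₁ v₀, mink_comm w v₀, mink_comm w v₁]
  ring

lemma mcross_frame {v₀ v₁ w : Fin 3 → ℝ} (h : posOrth v₀ v₁ w) (a₀ a₁ a₂ b₀ b₁ b₂ : ℝ) :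
    mcross (a₀ • v₀ + a₁ • v₁ + a₂ • w) (b₀ • v₀ + b₁ • v₁ + b₂ • w)
      = (a₂*b₁ - a₁*b₂) • v₀ + (a₀*b₂ - a₂*b₀) • v₁ + (a₀*b₁ - a₁*b₀) • w := by
  have h01 := h.2.2.2.2.2.2
  have h0w := h.cross_v₀_w
  have h1w := h.cross_v₁_w
  have h10 : mcross v₁ v₀ = -w := by rw [mcross_anti, h01]
  have hw0 : mcross w v₀ = -v₁ := by rw [mcross_anti, h0w]
  have hw1 : mcross w v₁ = v₀ := by rw [mcross_anti, h1w]; simp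
  simp only [mcross_add_left, mcross_add_right, mcross_smul_left, mcross_smul_right,
    mcross_self, h01, h0w, h1w, h10, hw0, hw1, smul_zero]
  module

/-- the operator (−D_t² + 1) in the moving frame {α̇, α ×ₘ α̇}. -/
theorem stmt_14 (r : ℝ) (hr : 0 < r) (v₀ v₁ w : Fin 3 → ℝ) (hsys : posOrth v₀ v₁ w)
    (lam₁ lam₂ : ℝ → ℝ) (h₁ : ContDiff ℝ 2 lam₁) (h₂ : ContDiff ℝ 2 lam₂) :
    let α : ℝ → Fin 3 → ℝ := fun t =>
      Real.sqrt (1 + r ^ 2) • w + (r * Real.cos (2 * Real.pi * t)) • v₁ +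
        (r * Real.sin (2 * Real.pi * t)) • v₀
    let V : ℝ → Fin 3 → ℝ := fun t => lam₁ t • deriv α t + lam₂ t • mcross (α t) (deriv α t)
    ∀ t : ℝ,
      -(covDt α (covDt α V) t) + V t =
        (-(deriv (deriv lam₁) t) + 4 * Real.pi * Real.sqrt (1 + r ^ 2) * deriv lam₂ t +
            (4 * Real.pi ^ 2 * (1 + r ^ 2) + 1) * lam₁ t) • deriv α t +
          (-(deriv (deriv lam₂) t) - 4 * Real.pi * Real.sqrt (1 + r ^ 2) * deriv lam₁ t +
            (4 * Real.pi ^ 2 * (1 + r ^ 2) + 1) * lam₂ t) • mcross (α t) (deriv α t) := by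
  intro α V t
  have hq : Real.sqrt (1 + r ^ 2) ^ 2 = 1 + r ^ 2 := Real.sq_sqrt (by positivity)
  have hlin : ∀ u : ℝ, HasDerivAt (fun x : ℝ => 2 * π * x) (2 * π) u := fun u => by
    simpa using (hasDerivAt_id u).const_mul (2 * π)
  have hcos : ∀ u : ℝ, HasDerivAt (fun x : ℝ => Real.cos (2 * π * x))
      (-Real.sin (2 * π * u) * (2 * π)) u := fun u => (hlin u).cos
  have hsin : ∀ u : ℝ, HasDerivAt (fun x : ℝ => Real.sin (2 * π * x))
      (Real.cos (2 * π * u) * (2 * π)) u := fun u => (hlin u).sin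
  -- derivative of α
  have hA : ∀ u : ℝ, HasDerivAt α
      ((2 * π * r * Real.cos (2 * π * u)) • v₀ + (-(2 * π * r * Real.sin (2 * π * u))) • v₁
        + (0:ℝ) • w) u := by
    intro u
    have hc : HasDerivAt (fun x : ℝ => r * Real.cos (2 * π * x))
        (r * (-Real.sin (2 * π * u) * (2 * π))) u := (hcos u).const_mul r
    have hs : HasDerivAt (fun x : ℝ => r * Real.sin (2 * π * x))
        (r * (Real.cos (2 * π * u) * (2 * π))) u := (hsin u).const_mul r
    have := ((hasDerivAt_const u (Real.sqrt (1 + r ^ 2) • w)).add (hc.smul_const v₁)).add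
      (hs.smul_const v₀)
    refine this.congr_deriv ?_
    match_scalars <;> ring
  have hαu : ∀ u : ℝ, α u = (r * Real.sin (2 * π * u)) • v₀ + (r * Real.cos (2 * π * u)) • v₁
      + Real.sqrt (1 + r ^ 2) • w := by
    intro u
    show Real.sqrt (1 + r ^ 2) • w + _ + _ = _
    module
  -- frame form of mcross α α̇
  have hE : ∀ u : ℝ, mcross (α u) (deriv α u)
      = (-(2 * π * r * Real.sqrt (1 + r ^ 2) * Real.sin (2 * π * u))) • v₀
        + (-(2 * π * r * Real.sqrt (1 + r ^ 2) * Real.cos (2 * π * u))) • v₁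
        + (-(2 * π * r ^ 2)) • w := by
    intro u
    have hsc := Real.sin_sq_add_cos_sq (2 * π * u)
    rw [(hA u).deriv, hαu u, mcross_frame hsys]
    match_scalars
    · ring
    · ring
    · linear_combination ((-2:ℝ) * π * r ^ 2) * hsc
  -- differentiability of the lambdas
  have hl1 : ∀ u : ℝ, HasDerivAt lam₁ (deriv lam₁ u) u := fun u =>
    ((h₁.differentiable (by norm_num)) u).hasDerivAt
  have hl2 : ∀ u : ℝ, HasDerivAt lam₂ (deriv lam₂ u) u := fun u =>
    ((h₂.differentiable (by norm_num)) u).hasDerivAt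
  have hc1 : ContDiff ℝ 1 (deriv lam₁) := by
    have := (contDiff_succ_iff_deriv (n := 1)).mp (by exact_mod_cast h₁)
    exact this.2.2
  have hc2 : ContDiff ℝ 1 (deriv lam₂) := by
    have := (contDiff_succ_iff_deriv (n := 1)).mp (by exact_mod_cast h₂)
    exact this.2.2
  have hl1' : ∀ u : ℝ, HasDerivAt (deriv lam₁) (deriv (deriv lam₁) u) u := fun u =>
    ((hc1.differentiable (by norm_num)) u).hasDerivAt
  have hl2' : ∀ u : ℝ, HasDerivAt (deriv lam₂) (deriv (deriv lam₂) u) u := fun u =>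
    ((hc2.differentiable (by norm_num)) u).hasDerivAt
  -- frame representation of V
  have hVrepr : V = fun u =>
      (2 * π * r * (lam₁ u * Real.cos (2 * π * u)
        - Real.sqrt (1 + r ^ 2) * lam₂ u * Real.sin (2 * π * u))) • v₀
      + (-(2 * π * r * (lam₁ u * Real.sin (2 * π * u)
        + Real.sqrt (1 + r ^ 2) * lam₂ u * Real.cos (2 * π * u)))) • v₁
      + (-(2 * π * r ^ 2 * lam₂ u)) • w := by
    funext u
    show lam₁ u • deriv α u + lam₂ u • mcross (α u) (deriv α u) = _
    rw [hE u, (hA u).deriv]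
    match_scalars <;> ring
  -- derivative of V
  have hVd : ∀ u : ℝ, HasDerivAt V
      ((2 * π * r * (deriv lam₁ u * Real.cos (2 * π * u)
          - 2 * π * lam₁ u * Real.sin (2 * π * u)
          - Real.sqrt (1 + r ^ 2) * deriv lam₂ u * Real.sin (2 * π * u)
          - 2 * π * Real.sqrt (1 + r ^ 2) * lam₂ u * Real.cos (2 * π * u))) • v₀
        + (-(2 * π * r * (deriv lam₁ u * Real.sin (2 * π * u)
          + 2 * π * lam₁ u * Real.cos (2 * π * u)
          + Real.sqrt (1 + r ^ 2) * deriv lam₂ u * Real.cos (2 * π * u)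
          - 2 * π * Real.sqrt (1 + r ^ 2) * lam₂ u * Real.sin (2 * π * u)))) • v₁
        + (-(2 * π * r ^ 2 * deriv lam₂ u)) • w) u := by
    intro u
    rw [hVrepr]
    have t0 : HasDerivAt (fun x : ℝ => 2 * π * r * (lam₁ x * Real.cos (2 * π * x)
        - Real.sqrt (1 + r ^ 2) * lam₂ x * Real.sin (2 * π * x)))
        (2 * π * r * ((deriv lam₁ u * Real.cos (2 * π * u)
          + lam₁ u * (-Real.sin (2 * π * u) * (2 * π)))
          - ((Real.sqrt (1 + r ^ 2) * deriv lam₂ u) * Real.sin (2 * π * u)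
          + Real.sqrt (1 + r ^ 2) * lam₂ u * (Real.cos (2 * π * u) * (2 * π))))) u :=
      (((hl1 u).mul (hcos u)).sub
        ((((hl2 u).const_mul (Real.sqrt (1 + r ^ 2))).mul (hsin u)))).const_mul (2 * π * r)
    have t1 : HasDerivAt (fun x : ℝ => -(2 * π * r * (lam₁ x * Real.sin (2 * π * x)
        + Real.sqrt (1 + r ^ 2) * lam₂ x * Real.cos (2 * π * x))))
        (-(2 * π * r * ((deriv lam₁ u * Real.sin (2 * π * u)
          + lam₁ u * (Real.cos (2 * π * u) * (2 * π)))
          + ((Real.sqrt (1 + r ^ 2) * deriv lam₂ u) * Real.cos (2 * π * u)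
          + Real.sqrt (1 + r ^ 2) * lam₂ u * (-Real.sin (2 * π * u) * (2 * π)))))) u :=
      ((((hl1 u).mul (hsin u)).add
        ((((hl2 u).const_mul (Real.sqrt (1 + r ^ 2))).mul (hcos u)))).const_mul (2 * π * r)).neg
    have t2 : HasDerivAt (fun x : ℝ => -(2 * π * r ^ 2 * lam₂ x))
        (-(2 * π * r ^ 2 * deriv lam₂ u)) u := (((hl2 u).const_mul (2 * π * r ^ 2))).neg
    have := ((t0.smul_const v₀).add (t1.smul_const v₁)).add (t2.smul_const w)
    refine this.congr_deriv ?_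
    match_scalars <;> ring
  -- the Minkowski factor for the first covariant derivative
  have hM1 : ∀ u : ℝ, mink (deriv V u) (α u) = -(4 * π ^ 2 * r ^ 2 * lam₁ u) := by
    intro u
    have hsc := Real.sin_sq_add_cos_sq (2 * π * u)
    rw [(hVd u).deriv, hαu u, mink_frame hsys]
    linear_combination ((-2:ℝ)*π*r^2*Real.sqrt (1+r^2)*deriv lam₂ u
      + (-4:ℝ)*π^2*r^2*lam₁ u) * hsc
  -- frame representation of the first covariant derivative
  have hW1 : covDt α V = fun u =>
      (2 * π * r * (deriv lam₁ u * Real.cos (2 * π * u)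
        - 2 * π * (1 + r ^ 2) * lam₁ u * Real.sin (2 * π * u)
        - Real.sqrt (1 + r ^ 2) * deriv lam₂ u * Real.sin (2 * π * u)
        - 2 * π * Real.sqrt (1 + r ^ 2) * lam₂ u * Real.cos (2 * π * u))) • v₀
      + (-(2 * π * r * (deriv lam₁ u * Real.sin (2 * π * u)
        + 2 * π * (1 + r ^ 2) * lam₁ u * Real.cos (2 * π * u)
        + Real.sqrt (1 + r ^ 2) * deriv lam₂ u * Real.cos (2 * π * u)
        - 2 * π * Real.sqrt (1 + r ^ 2) * lam₂ u * Real.sin (2 * π * u)))) • v₁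
      + (-(2 * π * r ^ 2 * (deriv lam₂ u
        + 2 * π * Real.sqrt (1 + r ^ 2) * lam₁ u))) • w := by
    funext u
    show deriv V u + mink (deriv V u) (α u) • α u = _
    rw [hM1 u, (hVd u).deriv, hαu u]
    match_scalars <;> ring
  -- derivative of the first covariant derivative
  have hW1d : ∀ u : ℝ, HasDerivAt (covDt α V)
      ((2 * π * r * (deriv (deriv lam₁) u * Real.cos (2 * π * u)
          - 2 * π * deriv lam₁ u * Real.sin (2 * π * u)
          - 2 * π * (1 + r ^ 2) * (deriv lam₁ u * Real.sin (2 * π * u)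
            + 2 * π * lam₁ u * Real.cos (2 * π * u))
          - Real.sqrt (1 + r ^ 2) * (deriv (deriv lam₂) u * Real.sin (2 * π * u)
            + 2 * π * deriv lam₂ u * Real.cos (2 * π * u))
          - 2 * π * Real.sqrt (1 + r ^ 2) * (deriv lam₂ u * Real.cos (2 * π * u)
            - 2 * π * lam₂ u * Real.sin (2 * π * u)))) • v₀
        + (-(2 * π * r * (deriv (deriv lam₁) u * Real.sin (2 * π * u)
          + 2 * π * deriv lam₁ u * Real.cos (2 * π * u)
          + 2 * π * (1 + r ^ 2) * (deriv lam₁ u * Real.cos (2 * π * u)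
            - 2 * π * lam₁ u * Real.sin (2 * π * u))
          + Real.sqrt (1 + r ^ 2) * (deriv (deriv lam₂) u * Real.cos (2 * π * u)
            - 2 * π * deriv lam₂ u * Real.sin (2 * π * u))
          - 2 * π * Real.sqrt (1 + r ^ 2) * (deriv lam₂ u * Real.sin (2 * π * u)
            + 2 * π * lam₂ u * Real.cos (2 * π * u))))) • v₁
        + (-(2 * π * r ^ 2 * (deriv (deriv lam₂) u
          + 2 * π * Real.sqrt (1 + r ^ 2) * deriv lam₁ u))) • w) u := by
    intro u
    rw [hW1]
    have s0 : HasDerivAt (fun x : ℝ => 2 * π * r * (deriv lam₁ x * Real.cos (2 * π * x)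
        - 2 * π * (1 + r ^ 2) * lam₁ x * Real.sin (2 * π * x)
        - Real.sqrt (1 + r ^ 2) * deriv lam₂ x * Real.sin (2 * π * x)
        - 2 * π * Real.sqrt (1 + r ^ 2) * lam₂ x * Real.cos (2 * π * x)))
        (2 * π * r * (((deriv (deriv lam₁) u * Real.cos (2 * π * u)
          + deriv lam₁ u * (-Real.sin (2 * π * u) * (2 * π)))
          - ((2 * π * (1 + r ^ 2) * deriv lam₁ u) * Real.sin (2 * π * u)
            + 2 * π * (1 + r ^ 2) * lam₁ u * (Real.cos (2 * π * u) * (2 * π)))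
          - ((Real.sqrt (1 + r ^ 2) * deriv (deriv lam₂) u) * Real.sin (2 * π * u)
            + Real.sqrt (1 + r ^ 2) * deriv lam₂ u * (Real.cos (2 * π * u) * (2 * π)))
          - ((2 * π * Real.sqrt (1 + r ^ 2) * deriv lam₂ u) * Real.cos (2 * π * u)
            + 2 * π * Real.sqrt (1 + r ^ 2) * lam₂ u * (-Real.sin (2 * π * u) * (2 * π)))))) u :=
      (((((hl1' u).mul (hcos u)).sub
        (((hl1 u).const_mul (2 * π * (1 + r ^ 2))).mul (hsin u))).sub
        (((hl2' u).const_mul (Real.sqrt (1 + r ^ 2))).mul (hsin u))).sub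
        (((hl2 u).const_mul (2 * π * Real.sqrt (1 + r ^ 2))).mul (hcos u))).const_mul (2 * π * r)
    have s1 : HasDerivAt (fun x : ℝ => -(2 * π * r * (deriv lam₁ x * Real.sin (2 * π * x)
        + 2 * π * (1 + r ^ 2) * lam₁ x * Real.cos (2 * π * x)
        + Real.sqrt (1 + r ^ 2) * deriv lam₂ x * Real.cos (2 * π * x)
        - 2 * π * Real.sqrt (1 + r ^ 2) * lam₂ x * Real.sin (2 * π * x))))
        (-(2 * π * r * (((deriv (deriv lam₁) u * Real.sin (2 * π * u)
          + deriv lam₁ u * (Real.cos (2 * π * u) * (2 * π)))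
          + ((2 * π * (1 + r ^ 2) * deriv lam₁ u) * Real.cos (2 * π * u)
            + 2 * π * (1 + r ^ 2) * lam₁ u * (-Real.sin (2 * π * u) * (2 * π)))
          + ((Real.sqrt (1 + r ^ 2) * deriv (deriv lam₂) u) * Real.cos (2 * π * u)
            + Real.sqrt (1 + r ^ 2) * deriv lam₂ u * (-Real.sin (2 * π * u) * (2 * π)))
          - ((2 * π * Real.sqrt (1 + r ^ 2) * deriv lam₂ u) * Real.sin (2 * π * u)
            + 2 * π * Real.sqrt (1 + r ^ 2) * lam₂ u * (Real.cos (2 * π * u) * (2 * π))))))) u :=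
      ((((((hl1' u).mul (hsin u)).add
        (((hl1 u).const_mul (2 * π * (1 + r ^ 2))).mul (hcos u))).add
        (((hl2' u).const_mul (Real.sqrt (1 + r ^ 2))).mul (hcos u))).sub
        (((hl2 u).const_mul (2 * π * Real.sqrt (1 + r ^ 2))).mul (hsin u))).const_mul
          (2 * π * r)).neg
    have s2 : HasDerivAt (fun x : ℝ => -(2 * π * r ^ 2 * (deriv lam₂ x
        + 2 * π * Real.sqrt (1 + r ^ 2) * lam₁ x)))
        (-(2 * π * r ^ 2 * (deriv (deriv lam₂) u
          + 2 * π * Real.sqrt (1 + r ^ 2) * deriv lam₁ u))) u :=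
      (((hl2' u).add ((hl1 u).const_mul (2 * π * Real.sqrt (1 + r ^ 2)))).const_mul
        (2 * π * r ^ 2)).neg
    have := ((s0.smul_const v₀).add (s1.smul_const v₁)).add (s2.smul_const w)
    refine this.congr_deriv ?_
    match_scalars <;> ring
  -- the Minkowski factor for the second covariant derivative
  have hM2 : mink (deriv (covDt α V) t) (α t)
      = 4 * π ^ 2 * r ^ 2 * (2 * π * Real.sqrt (1 + r ^ 2) * lam₂ t - deriv lam₁ t) := by
    have hsc := Real.sin_sq_add_cos_sq (2 * π * t)
    rw [(hW1d t).deriv, hαu t, mink_frame hsys]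
    linear_combination ((-2:ℝ)*π*r^2*Real.sqrt (1+r^2)*deriv (deriv lam₂) t
      + (-8:ℝ)*π^2*r^2*deriv lam₁ t + (-4:ℝ)*π^2*r^4*deriv lam₁ t
      + (8:ℝ)*π^3*r^2*Real.sqrt (1+r^2)*lam₂ t) * hsc
      + ((4:ℝ)*π^2*r^2*deriv lam₁ t) * hq
  -- finish
  have hW2 : covDt α (covDt α V) t = deriv (covDt α V) t
      + (4 * π ^ 2 * r ^ 2 * (2 * π * Real.sqrt (1 + r ^ 2) * lam₂ t - deriv lam₁ t)) • α t := by
    show deriv (covDt α V) t + mink (deriv (covDt α V) t) (α t) • α t = _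
    rw [hM2]
  rw [hW2, (hW1d t).deriv, hE t, (hA t).deriv, hαu t]
  simp only [hVrepr]
  match_scalars
  · linear_combination ((-8:ℝ)*π^2*r*Real.sin (2*π*t)*deriv lam₁ t) * hq
  · linear_combination ((-8:ℝ)*π^2*r*Real.cos (2*π*t)*deriv lam₁ t) * hq
  · linear_combination ((-8:ℝ)*π^3*r^2*lam₂ t) * hq
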